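/- Let d ≥ 2, λ > 0, and r > sqrt(2d/(d+1))·(λ/2), and let Q = {q_1,...,q_N} ⊂ E^d satisfy |q_i − q_j| ≤ λ for all i < j. Then V_d(∩_{i=1}^N B^d[q_i, r]) ≥ V_d(B^d[o, sqrt(r^2 − ((d−1)/(d+1))(λ/2)^2) − λ/2]). -/

import Mathlib

open MeasureTheory Set Metric Finset
open scoped RealInnerProductSpace ENNReal

set_option maxHeartbeats 1000000 in
lemma jung_circumradius {d N : ℕ} (hN : 0 < N) (lam : ℝ) (hlam : 0 ≤ lam)
    (q : Fin N → EuclideanSpace ℝ (Fin d))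
    (hQ : ∀ i j, i ≠ j → dist (q i) (q j) ≤ lam) :
    ∃ c : EuclideanSpace ℝ (Fin d), ∀ i,
      dist (q i) c ≤ Real.sqrt (2 * d / (d + 1)) * (lam / 2) := by
  classical
  haveI : Nonempty (Fin N) := ⟨⟨0, hN⟩⟩
  set J : ℝ := Real.sqrt (2 * d / (d + 1)) * (lam / 2) with hJ
  have hJ0 : 0 ≤ J := mul_nonneg (Real.sqrt_nonneg _) (by linarith)
  set Φ : EuclideanSpace ℝ (Fin d) → ℝ :=
    fun x => univ.sup' univ_nonempty (fun i => dist x (q i)) with hΦ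
  have hΦc : Continuous Φ :=
    Continuous.finset_sup'_apply univ_nonempty
      (fun i _ => Continuous.dist continuous_id continuous_const)
  have hΦ0 : ∀ x, 0 ≤ Φ x := fun x =>
    le_trans dist_nonneg (Finset.le_sup' (fun i => dist x (q i)) (mem_univ ⟨0, hN⟩))
  set R0 : ℝ := Φ (q ⟨0, hN⟩) with hR0
  obtain ⟨c, hcK, hcmin⟩ := (isCompact_closedBall (q ⟨0, hN⟩) (R0 + 1)).exists_isMinOn
    ⟨q ⟨0, hN⟩, mem_closedBall_self (by linarith [hΦ0 (q ⟨0, hN⟩)])⟩ hΦc.continuousOn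
  have hglobal : ∀ x, Φ c ≤ Φ x := by
    intro x
    by_cases hx : x ∈ closedBall (q ⟨0, hN⟩) (R0 + 1)
    · exact hcmin hx
    · have h1 : R0 + 1 < dist x (q ⟨0, hN⟩) := by simpa [mem_closedBall] using hx
      have h2 : dist x (q ⟨0, hN⟩) ≤ Φ x :=
        Finset.le_sup' (fun i => dist x (q i)) (mem_univ _)
      have h3 : Φ c ≤ R0 := hcmin (mem_closedBall_self (by linarith [hΦ0 (q ⟨0, hN⟩)]))
      linarith
  set ρ : ℝ := Φ c with hρdef
  have hρ0 : 0 ≤ ρ := hΦ0 c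
  have hle : ∀ i, dist c (q i) ≤ ρ := fun i =>
    Finset.le_sup' (fun i => dist c (q i)) (mem_univ i)
  suffices hρJ : ρ ≤ J by
    exact ⟨c, fun i => by rw [dist_comm]; exact (hle i).trans hρJ⟩
  rcases eq_or_lt_of_le hρ0 with h0 | hρpos
  · exact le_trans h0.symm.le hJ0
  set C : Finset (Fin N) := univ.filter (fun i => dist c (q i) = ρ) with hC
  have hCne : C.Nonempty := by
    obtain ⟨i, _, hi⟩ := Finset.exists_mem_eq_sup' (univ_nonempty (α := Fin N))
      (fun i => dist c (q i))
    exact ⟨i, by simp [hC, hi.symm]; rfl⟩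
  have hch : c ∈ convexHull ℝ (q '' (C : Set (Fin N))) := by
    by_contra hnc
    set S : Set (EuclideanSpace ℝ (Fin d)) := convexHull ℝ (q '' (C : Set (Fin N))) with hS
    have hSconv : Convex ℝ S := convex_convexHull _ _
    have hScompact : IsCompact S := (C.finite_toSet.image q).isCompact_convexHull ℝ
    have hSne : S.Nonempty := by
      obtain ⟨i, hi⟩ := hCne
      exact ⟨q i, subset_convexHull _ _ ⟨i, by simpa using hi, rfl⟩⟩
    obtain ⟨v0, hv0S, hv0⟩ :=
      exists_norm_eq_iInf_of_complete_convex hSne hScompact.isClosed.isComplete hSconv c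
    have hproj : ∀ y ∈ S, ⟪c - v0, y - v0⟫ ≤ 0 :=
      (norm_eq_iInf_iff_real_inner_le_zero hSconv hv0S).mp hv0
    set v : EuclideanSpace ℝ (Fin d) := v0 - c with hv
    have hvne : v ≠ 0 := by
      intro h
      apply hnc
      have : c = v0 := by
        have := h
        rw [hv, sub_eq_zero] at this
        exact this.symm
      rw [this]; exact hv0S
    have hε : ∀ i ∈ C, ‖v‖ ^ 2 ≤ ⟪v, q i - c⟫ := by
      intro i hi
      have h1 : ⟪c - v0, q i - v0⟫ ≤ 0 :=
        hproj _ (subset_convexHull _ _ ⟨i, by simpa using hi, rfl⟩)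
      have h2 : (c - v0 : EuclideanSpace ℝ (Fin d)) = -v := by rw [hv]; abel
      have h3 : (q i - v0 : EuclideanSpace ℝ (Fin d)) = (q i - c) - v := by rw [hv]; abel
      rw [h2, h3, inner_neg_left, inner_sub_right, real_inner_self_eq_norm_sq] at h1
      linarith
    set t : ℝ := univ.inf' univ_nonempty
      (fun i => if i ∈ C then 1 else (ρ - dist c (q i)) / (2 * ‖v‖)) with ht
    have hvpos : 0 < ‖v‖ := norm_pos_iff.mpr hvne
    have ht0 : 0 < t := by
      rw [ht, Finset.lt_inf'_iff]
      intro i _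
      by_cases hi : i ∈ C
      · simp [hi]
      · have hlt : dist c (q i) < ρ := lt_of_le_of_ne (hle i) (by simpa [hC] using hi)
        simp only [hi, if_false]
        exact div_pos (by linarith) (by positivity)
    have ht1 : t ≤ 1 := by
      obtain ⟨i, hi⟩ := hCne
      exact le_trans (Finset.inf'_le _ (mem_univ i)) (by simp [hi])
    have hless : Φ (c + t • v) < ρ := by
      rw [hΦ]
      rw [Finset.sup'_lt_iff]
      intro i _
      by_cases hi : i ∈ C
      · have hdist : dist (c + t • v) (q i) ^ 2 < ρ ^ 2 := by
          have hexp : dist (c + t • v) (q i) ^ 2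
              = dist c (q i) ^ 2 - 2 * t * ⟪v, q i - c⟫ + t ^ 2 * ‖v‖ ^ 2 := by
            rw [dist_eq_norm, dist_eq_norm]
            have he : c + t • v - q i = (c - q i) + t • v := by abel
            rw [he, norm_add_sq_real, real_inner_smul_right, norm_smul]
            have hcm : ⟪c - q i, v⟫ = - ⟪v, q i - c⟫ := by
              rw [real_inner_comm v, show (c - q i : EuclideanSpace ℝ (Fin d)) = -(q i - c) by abel,
                inner_neg_right]
            rw [hcm]
            simp only [Real.norm_eq_abs, mul_pow, sq_abs]
            ring
          have hci : dist c (q i) = ρ := by simpa [hC] using hi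
          have hεi := hε i hi
          rw [hexp, hci]
          nlinarith [mul_pos ht0 (mul_pos hvpos hvpos), sq_nonneg t, sq_nonneg ‖v‖]
        exact lt_of_pow_lt_pow_left₀ 2 hρ0 hdist
      · have htle : t ≤ (ρ - dist c (q i)) / (2 * ‖v‖) := by
          refine le_trans (Finset.inf'_le _ (mem_univ i)) ?_
          simp [hi]
        have hlt : dist c (q i) < ρ := lt_of_le_of_ne (hle i) (by simpa [hC] using hi)
        have htri : dist (c + t • v) (q i) ≤ dist c (q i) + t * ‖v‖ := by
          have hd : dist (c + t • v) c = t * ‖v‖ := by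
            rw [dist_eq_norm, add_sub_cancel_left, norm_smul, Real.norm_eq_abs, abs_of_pos ht0]
          calc dist (c + t • v) (q i) ≤ dist (c + t • v) c + dist c (q i) := dist_triangle _ _ _
            _ = dist c (q i) + t * ‖v‖ := by rw [hd]; ring
        have h2 : t * ‖v‖ ≤ (ρ - dist c (q i)) / 2 := by
          calc t * ‖v‖ ≤ ((ρ - dist c (q i)) / (2 * ‖v‖)) * ‖v‖ :=
                mul_le_mul_of_nonneg_right htle hvpos.le
            _ = (ρ - dist c (q i)) / 2 := by field_simp
        linarith
    exact absurd (hglobal (c + t • v)) (not_le.mpr hless)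
  rw [convexHull_eq_union] at hch
  simp only [Set.mem_iUnion] at hch
  obtain ⟨t, hts, hai, hct⟩ := hch
  have htne : t.Nonempty := by
    rcases Finset.eq_empty_or_nonempty t with h | h
    · rw [h] at hct; simp at hct
    · exact h
  have hct' := hct
  rw [Finset.convexHull_eq] at hct'
  obtain ⟨w, hw0, hw1, hcm⟩ := hct'
  have hcc : ∑ y ∈ t, w y • y = c := by
    rw [Finset.centerMass_eq_of_sum_1 t id hw1] at hcm
    simpa using hcm
  have hcard1 : 1 ≤ t.card := Finset.card_pos.mpr htne
  have hcard : t.card ≤ d + 1 := by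
    have h0 := hai.card_le_finrank_succ
    rw [Fintype.card_coe] at h0
    have h1 : Module.finrank ℝ ↥(vectorSpan ℝ (Set.range ((↑) : ↥t → EuclideanSpace ℝ (Fin d))))
        ≤ Module.finrank ℝ (EuclideanSpace ℝ (Fin d)) := Submodule.finrank_le _
    rw [finrank_euclideanSpace_fin] at h1
    omega
  have hy_dist : ∀ y ∈ t, dist y c = ρ := by
    intro y hy
    obtain ⟨j, hj, hje⟩ := hts hy
    have hj' : dist c (q j) = ρ := by simpa [hC] using hj
    rw [← hje, dist_comm]
    exact hj'
  have hy_pair : ∀ y ∈ t, ∀ y' ∈ t, y ≠ y' → dist y y' ≤ lam := by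
    intro y hy y' hy' hne
    obtain ⟨a, _, ha⟩ := hts hy
    obtain ⟨b, _, hb⟩ := hts hy'
    have hab : a ≠ b := by
      intro h
      apply hne
      rw [← ha, ← hb, h]
    rw [← ha, ← hb]
    exact hQ a b hab
  have huz : ∑ y ∈ t, w y • (y - c) = 0 := by
    have h1 : ∑ y ∈ t, w y • (y - c) = (∑ y ∈ t, w y • y) - ∑ y ∈ t, w y • c := by
      rw [← Finset.sum_sub_distrib]
      exact Finset.sum_congr rfl fun y _ => smul_sub _ _ _
    rw [h1, hcc, ← Finset.sum_smul, hw1, one_smul, sub_self]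
  have hnormu : ∀ y ∈ t, ‖y - c‖ = ρ := fun y hy => by
    rw [← dist_eq_norm]; exact hy_dist y hy
  have hinner : ∑ y ∈ t, ∑ y' ∈ t, w y * w y' * ⟪y - c, y' - c⟫ = 0 := by
    have hrow : ∀ y ∈ t, ∑ y' ∈ t, w y * w y' * ⟪y - c, y' - c⟫
        = w y * ⟪y - c, ∑ y' ∈ t, w y' • (y' - c)⟫ := by
      intro y _
      rw [inner_sum, Finset.mul_sum]
      refine Finset.sum_congr rfl fun y' _ => ?_
      rw [real_inner_smul_right]
      ring
    rw [Finset.sum_congr rfl hrow]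
    simp [huz]
  have hconst : ∑ y ∈ t, ∑ y' ∈ t, w y * w y' * (2 * ρ ^ 2) = 2 * ρ ^ 2 := by
    have hrow : ∀ y ∈ t, ∑ y' ∈ t, w y * w y' * (2 * ρ ^ 2)
        = (w y * (2 * ρ ^ 2)) * ∑ y' ∈ t, w y' := by
      intro y _
      rw [Finset.mul_sum]
      exact Finset.sum_congr rfl fun y' _ => by ring
    rw [Finset.sum_congr rfl hrow, hw1]
    simp only [mul_one]
    rw [← Finset.sum_mul, hw1, one_mul]
  have hS2 : ∑ y ∈ t, ∑ y' ∈ t, w y * w y' * ‖(y - c) - (y' - c)‖ ^ 2 = 2 * ρ ^ 2 := by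
    have hterm : ∀ y ∈ t, ∀ y' ∈ t, w y * w y' * ‖(y - c) - (y' - c)‖ ^ 2
        = w y * w y' * (2 * ρ ^ 2) - 2 * (w y * w y' * ⟪y - c, y' - c⟫) := by
      intro y hy y' hy'
      rw [norm_sub_sq_real, hnormu y hy, hnormu y' hy']
      ring
    calc ∑ y ∈ t, ∑ y' ∈ t, w y * w y' * ‖(y - c) - (y' - c)‖ ^ 2
        = ∑ y ∈ t, ∑ y' ∈ t,
            (w y * w y' * (2 * ρ ^ 2) - 2 * (w y * w y' * ⟪y - c, y' - c⟫)) :=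
          Finset.sum_congr rfl fun y hy => Finset.sum_congr rfl fun y' hy' => hterm y hy y' hy'
      _ = (∑ y ∈ t, ∑ y' ∈ t, w y * w y' * (2 * ρ ^ 2))
            - 2 * (∑ y ∈ t, ∑ y' ∈ t, w y * w y' * ⟪y - c, y' - c⟫) := by
          rw [Finset.mul_sum, ← Finset.sum_sub_distrib]
          refine Finset.sum_congr rfl fun y _ => ?_
          rw [Finset.mul_sum, ← Finset.sum_sub_distrib]
      _ = 2 * ρ ^ 2 := by rw [hinner, hconst]; ring
  have hrowbd : ∀ y ∈ t, ∑ y' ∈ t, w y * w y' * ‖(y - c) - (y' - c)‖ ^ 2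
      ≤ w y * (1 - w y) * lam ^ 2 := by
    intro y hy
    have hzero : w y * w y * ‖(y - c) - (y - c)‖ ^ 2 = 0 := by
      simp
    have hsplit : ∑ y' ∈ t, w y * w y' * ‖(y - c) - (y' - c)‖ ^ 2
        = ∑ y' ∈ t.erase y, w y * w y' * ‖(y - c) - (y' - c)‖ ^ 2 := by
      rw [← Finset.sum_erase_add t _ hy, hzero, add_zero]
    rw [hsplit]
    have hbd : ∀ y' ∈ t.erase y, w y * w y' * ‖(y - c) - (y' - c)‖ ^ 2
        ≤ w y * w y' * lam ^ 2 := by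
      intro y' hy'
      have hne : y' ≠ y := (Finset.mem_erase.mp hy').1
      have hy't : y' ∈ t := (Finset.mem_erase.mp hy').2
      have hdie : ‖(y - c) - (y' - c)‖ ≤ lam := by
        have he : (y - c) - (y' - c) = y - y' := by abel
        rw [he, ← dist_eq_norm]
        exact hy_pair y hy y' hy't hne.symm
      have h2 : ‖(y - c) - (y' - c)‖ ^ 2 ≤ lam ^ 2 :=
        pow_le_pow_left₀ (norm_nonneg _) hdie 2
      exact mul_le_mul_of_nonneg_left h2 (mul_nonneg (hw0 y hy) (hw0 y' hy't))
    calc ∑ y' ∈ t.erase y, w y * w y' * ‖(y - c) - (y' - c)‖ ^ 2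
        ≤ ∑ y' ∈ t.erase y, w y * w y' * lam ^ 2 := Finset.sum_le_sum hbd
      _ = (w y * lam ^ 2) * ∑ y' ∈ t.erase y, w y' := by
          rw [Finset.mul_sum]
          exact Finset.sum_congr rfl fun y' _ => by ring
      _ = w y * (1 - w y) * lam ^ 2 := by
          rw [Finset.sum_erase_eq_sub hy, hw1]
          ring
  have hsum2 : 2 * ρ ^ 2 ≤ (1 - ∑ y ∈ t, w y ^ 2) * lam ^ 2 := by
    rw [← hS2]
    calc ∑ y ∈ t, ∑ y' ∈ t, w y * w y' * ‖(y - c) - (y' - c)‖ ^ 2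
        ≤ ∑ y ∈ t, w y * (1 - w y) * lam ^ 2 := Finset.sum_le_sum hrowbd
      _ = (1 - ∑ y ∈ t, w y ^ 2) * lam ^ 2 := by
          have hterm : ∀ y ∈ t, w y * (1 - w y) * lam ^ 2
              = w y * lam ^ 2 - w y ^ 2 * lam ^ 2 := fun y _ => by ring
          rw [Finset.sum_congr rfl hterm, Finset.sum_sub_distrib,
            ← Finset.sum_mul, ← Finset.sum_mul, hw1]
          ring
  have hwsq : (1 : ℝ) ≤ (d + 1 : ℝ) * ∑ y ∈ t, w y ^ 2 := by
    have h1 : (1 : ℝ) ≤ (t.card : ℝ) * ∑ y ∈ t, w y ^ 2 := by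
      have h := sq_sum_le_card_mul_sum_sq (s := t) (f := w)
      rw [hw1] at h
      simpa using h
    have h2 : (t.card : ℝ) ≤ (d + 1 : ℝ) := by exact_mod_cast hcard
    have h3 : (0 : ℝ) ≤ ∑ y ∈ t, w y ^ 2 := Finset.sum_nonneg fun y _ => sq_nonneg _
    nlinarith
  have hρsq : ρ ^ 2 ≤ 2 * d / (d + 1) * (lam / 2) ^ 2 := by
    have hd1 : (0 : ℝ) < (d + 1 : ℝ) := by positivity
    have key : 2 * ρ ^ 2 * ((d : ℝ) + 1) ≤ (d : ℝ) * lam ^ 2 := by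
      nlinarith [mul_le_mul_of_nonneg_left hsum2 hd1.le,
        mul_le_mul_of_nonneg_right hwsq (sq_nonneg lam)]
    rw [div_mul_eq_mul_div, le_div_iff₀ hd1]
    nlinarith [key]
  calc ρ = Real.sqrt (ρ ^ 2) := (Real.sqrt_sq hρ0).symm
    _ ≤ Real.sqrt (2 * d / (d + 1) * (lam / 2) ^ 2) := Real.sqrt_le_sqrt hρsq
    _ = J := by
        rw [Real.sqrt_mul (by positivity), Real.sqrt_sq (by linarith)]

noncomputable def radialSet (d : ℕ)
    (G : Metric.sphere (0 : EuclideanSpace ℝ (Fin d)) 1 → ℝ) :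
    Set (EuclideanSpace ℝ (Fin d)) :=
  Subtype.val '' ((homeomorphUnitSphereProd (EuclideanSpace ℝ (Fin d))) ⁻¹'
    {p : Metric.sphere (0 : EuclideanSpace ℝ (Fin d)) 1 × Set.Ioi (0:ℝ) | (p.2 : ℝ) ≤ G p.1})

lemma radialSet_eq (d : ℕ) (G : Metric.sphere (0 : EuclideanSpace ℝ (Fin d)) 1 → ℝ) :
    radialSet d G = {x : EuclideanSpace ℝ (Fin d) |
      ∃ (u : Metric.sphere (0 : EuclideanSpace ℝ (Fin d)) 1) (t : ℝ),
        0 < t ∧ t ≤ G u ∧ x = t • (u : EuclideanSpace ℝ (Fin d))} := by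
  ext x
  constructor
  · rintro ⟨y, hy, rfl⟩
    rw [Set.mem_preimage, Set.mem_setOf_eq] at hy
    refine ⟨(homeomorphUnitSphereProd _ y).1, ((homeomorphUnitSphereProd _ y).2 : ℝ),
      (homeomorphUnitSphereProd _ y).2.2, hy, ?_⟩
    have h := homeomorphUnitSphereProd_symm_apply_coe (EuclideanSpace ℝ (Fin d))
      (homeomorphUnitSphereProd _ y)
    rwa [Homeomorph.symm_apply_apply] at h
  · rintro ⟨u, t, ht0, htG, rfl⟩
    refine ⟨(homeomorphUnitSphereProd _).symm (u, ⟨t, ht0⟩), ?_, ?_⟩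
    · rw [Set.mem_preimage, Homeomorph.apply_symm_apply, Set.mem_setOf_eq]
      exact htG
    · exact homeomorphUnitSphereProd_symm_apply_coe _ _

lemma radialSet_neg (d : ℕ) (G : Metric.sphere (0 : EuclideanSpace ℝ (Fin d)) 1 → ℝ) :
    -(radialSet d G) = radialSet d (fun u => G (-u)) := by
  rw [radialSet_eq, radialSet_eq]
  ext x
  simp only [Set.mem_neg, Set.mem_setOf_eq]
  constructor
  · rintro ⟨u, t, ht0, htG, hx⟩
    refine ⟨-u, t, ht0, ?_, ?_⟩
    · rw [neg_neg]; exact htG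
    · have h2 : ((-u : Metric.sphere (0 : EuclideanSpace ℝ (Fin d)) 1) :
          EuclideanSpace ℝ (Fin d)) = -(u : EuclideanSpace ℝ (Fin d)) := rfl
      rw [h2, smul_neg, ← hx, neg_neg]
  · rintro ⟨u, t, ht0, htG, hx⟩
    refine ⟨-u, t, ht0, htG, ?_⟩
    have h2 : ((-u : Metric.sphere (0 : EuclideanSpace ℝ (Fin d)) 1) :
        EuclideanSpace ℝ (Fin d)) = -(u : EuclideanSpace ℝ (Fin d)) := rfl
    rw [h2, smul_neg, hx]

lemma volume_radialSet {d : ℕ} (hd : 0 < d)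
    (G : Metric.sphere (0 : EuclideanSpace ℝ (Fin d)) 1 → ℝ)
    (hG : Measurable G) (hGpos : ∀ u, 0 < G u) :
    volume (radialSet d G)
      = ∫⁻ u, ENNReal.ofReal (G u ^ d / d)
          ∂((volume : Measure (EuclideanSpace ℝ (Fin d))).toSphere) := by
  set S := {p : Metric.sphere (0 : EuclideanSpace ℝ (Fin d)) 1 × Set.Ioi (0:ℝ) |
    (p.2 : ℝ) ≤ G p.1} with hSdef
  have hSmeas : MeasurableSet S :=
    measurableSet_le (continuous_subtype_val.comp continuous_snd).measurable
      (hG.comp measurable_fst)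
  have h1 : volume (radialSet d G)
      = Measure.comap Subtype.val (volume : Measure (EuclideanSpace ℝ (Fin d)))
          ((homeomorphUnitSphereProd (EuclideanSpace ℝ (Fin d))) ⁻¹' S) :=
    (comap_subtype_coe_apply (measurableSet_singleton (0 : EuclideanSpace ℝ (Fin d))).compl volume _).symm
  rw [h1,
    (volume.measurePreserving_homeomorphUnitSphereProd).measure_preimage
      hSmeas.nullMeasurableSet,
    Measure.prod_apply hSmeas]
  refine lintegral_congr fun u => ?_
  have hslice : (Prod.mk u ⁻¹' S) = Set.Iic (⟨G u, hGpos u⟩ : Set.Ioi (0:ℝ)) := by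
    ext t
    simp only [hSdef, Set.mem_preimage, Set.mem_setOf_eq, Set.mem_Iic]
    exact Iff.rfl
  have hsingleton :
      (Measure.volumeIoiPow (Module.finrank ℝ (EuclideanSpace ℝ (Fin d)) - 1))
        {(⟨G u, hGpos u⟩ : Set.Ioi (0:ℝ))} = 0 := by
    rw [Measure.volumeIoiPow, withDensity_apply _ (measurableSet_singleton _)]
    have h0 : (Measure.comap Subtype.val (volume : Measure ℝ))
        {(⟨G u, hGpos u⟩ : Set.Ioi (0:ℝ))} = 0 := by
      rw [comap_subtype_coe_apply measurableSet_Ioi]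
      simp
    exact setLIntegral_measure_zero _ _ h0
  have hIic : (Measure.volumeIoiPow (Module.finrank ℝ (EuclideanSpace ℝ (Fin d)) - 1))
      (Set.Iic (⟨G u, hGpos u⟩ : Set.Ioi (0:ℝ)))
      = (Measure.volumeIoiPow (Module.finrank ℝ (EuclideanSpace ℝ (Fin d)) - 1))
        (Set.Iio (⟨G u, hGpos u⟩ : Set.Ioi (0:ℝ))) := by
    rw [← Set.Iio_union_right]
    refine le_antisymm ?_ (measure_mono Set.subset_union_left)
    refine le_trans (measure_union_le _ _) ?_
    rw [hsingleton, add_zero]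
  rw [hslice, hIic, Measure.volumeIoiPow_apply_Iio]
  have hfr : Module.finrank ℝ (EuclideanSpace ℝ (Fin d)) = d := finrank_euclideanSpace_fin
  rw [hfr, Nat.sub_add_cancel hd]
  congr 1
  congr 1
  rw [Nat.cast_pred hd]
  ring

lemma sqrtF_pos (csq x : ℝ) (hc : 0 < csq) : 0 < Real.sqrt (csq + x ^ 2) - x := by
  rcases le_or_gt x 0 with h | h
  · have : 0 < Real.sqrt (csq + x ^ 2) := Real.sqrt_pos.mpr (by nlinarith [sq_nonneg x])
    linarith
  · have h1 : x = Real.sqrt (x ^ 2) := (Real.sqrt_sq h.le).symm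
    have h2 : Real.sqrt (x ^ 2) < Real.sqrt (csq + x ^ 2) :=
      Real.sqrt_lt_sqrt (sq_nonneg x) (by linarith)
    linarith
  
lemma sqrtF_anti (csq a b : ℝ) (hc : 0 < csq) (hab : a ≤ b) :
    Real.sqrt (csq + b ^ 2) - b ≤ Real.sqrt (csq + a ^ 2) - a := by
  have ha0 : (0:ℝ) ≤ csq + a ^ 2 := by nlinarith [sq_nonneg a]
  have hsa : Real.sqrt (csq + a ^ 2) ^ 2 = csq + a ^ 2 := Real.sq_sqrt ha0
  have haa : a ≤ Real.sqrt (csq + a ^ 2) := by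
    calc a ≤ |a| := le_abs_self a
      _ = Real.sqrt (a ^ 2) := (Real.sqrt_sq_eq_abs a).symm
      _ ≤ Real.sqrt (csq + a ^ 2) := Real.sqrt_le_sqrt (by linarith)
  have h1 : Real.sqrt (csq + b ^ 2) ≤ Real.sqrt (csq + a ^ 2) + (b - a) := by
    rw [← Real.sqrt_sq (show (0:ℝ) ≤ Real.sqrt (csq + a ^ 2) + (b - a) by
      have := Real.sqrt_nonneg (csq + a ^ 2); linarith)]
    apply Real.sqrt_le_sqrt
    nlinarith
  linarith

lemma sqrt_midpoint_convex (csq x1 x2 : ℝ) (hc : 0 < csq) :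
    Real.sqrt (csq + ((x1 + x2) / 2) ^ 2)
      ≤ (Real.sqrt (csq + x1 ^ 2) + Real.sqrt (csq + x2 ^ 2)) / 2 := by
  set A := Real.sqrt (csq + x1 ^ 2) with hA
  set B := Real.sqrt (csq + x2 ^ 2) with hB
  have hA0 : 0 ≤ A := Real.sqrt_nonneg _
  have hB0 : 0 ≤ B := Real.sqrt_nonneg _
  have hA2 : A ^ 2 = csq + x1 ^ 2 := Real.sq_sqrt (by nlinarith [sq_nonneg x1])
  have hB2 : B ^ 2 = csq + x2 ^ 2 := Real.sq_sqrt (by nlinarith [sq_nonneg x2])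
  have hABsq : (csq + x1 * x2) ^ 2 ≤ (A * B) ^ 2 := by
    nlinarith [sq_nonneg (x1 - x2), hc.le]
  have hAB : csq + x1 * x2 ≤ A * B := by
    rcases le_or_gt (csq + x1 * x2) 0 with h | h
    · exact le_trans h (mul_nonneg hA0 hB0)
    · nlinarith [mul_nonneg hA0 hB0]
  have hgoal : csq + ((x1 + x2) / 2) ^ 2 ≤ ((A + B) / 2) ^ 2 := by nlinarith
  calc Real.sqrt (csq + ((x1 + x2) / 2) ^ 2) ≤ Real.sqrt (((A + B) / 2) ^ 2) :=
        Real.sqrt_le_sqrt hgoal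
    _ = (A + B) / 2 := Real.sqrt_sq (by linarith)

lemma pair_pow_ineq (d : ℕ) (csq lamh x1 x2 : ℝ) (hc : 0 < csq)
    (hx : x1 + x2 ≤ 2 * lamh) :
    2 * (Real.sqrt (csq + lamh ^ 2) - lamh) ^ d
      ≤ (Real.sqrt (csq + x1 ^ 2) - x1) ^ d + (Real.sqrt (csq + x2 ^ 2) - x2) ^ d := by
  set F1 := Real.sqrt (csq + x1 ^ 2) - x1 with hF1
  set F2 := Real.sqrt (csq + x2 ^ 2) - x2 with hF2
  set H := Real.sqrt (csq + lamh ^ 2) - lamh with hH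
  have hF10 : 0 < F1 := sqrtF_pos csq x1 hc
  have hF20 : 0 < F2 := sqrtF_pos csq x2 hc
  have hH0 : 0 < H := sqrtF_pos csq lamh hc
  have hmid : H ≤ (F1 + F2) / 2 := by
    have h1 : H ≤ Real.sqrt (csq + ((x1 + x2) / 2) ^ 2) - (x1 + x2) / 2 :=
      sqrtF_anti csq ((x1 + x2) / 2) lamh hc (by linarith)
    have h2 : Real.sqrt (csq + ((x1 + x2) / 2) ^ 2) - (x1 + x2) / 2 ≤ (F1 + F2) / 2 := by
      have := sqrt_midpoint_convex csq x1 x2 hc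
      rw [hF1, hF2]
      linarith
    linarith
  have hpow1 : H ^ d ≤ ((F1 + F2) / 2) ^ d := pow_le_pow_left₀ hH0.le hmid d
  have hpow2 : ((F1 + F2) / 2) ^ d ≤ (F1 ^ d + F2 ^ d) / 2 := by
    have hconv := (convexOn_pow d).2 (Set.mem_Ici.mpr hF10.le) (Set.mem_Ici.mpr hF20.le)
      (by norm_num : (0:ℝ) ≤ (1:ℝ)/2) (by norm_num : (0:ℝ) ≤ (1:ℝ)/2) (by norm_num)
    simp only [smul_eq_mul] at hconv
    calc ((F1 + F2) / 2) ^ d = ((1:ℝ)/2 * F1 + (1:ℝ)/2 * F2) ^ d := by ring_nf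
      _ ≤ (1:ℝ)/2 * F1 ^ d + (1:ℝ)/2 * F2 ^ d := hconv
      _ = (F1 ^ d + F2 ^ d) / 2 := by ring
  linarith


set_option maxHeartbeats 1600000 in
/-- (Jung + Schramm) If the points of `Q` have pairwise distances at most
`λ` and `r > √(2d/(d+1))·(λ/2)`, then
`V(⋂ᵢ B^d[qᵢ, r]) ≥ V(B^d[o, √(r² − ((d−1)/(d+1))·(λ/2)²) − λ/2])`. -/
theorem euclidean_intersection_volume_lower_bound
    (d N : ℕ) (hd : 2 ≤ d)
    (r lam : ℝ) (hlam : 0 < lam)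
    (hr : Real.sqrt (2 * (d : ℝ) / ((d : ℝ) + 1)) * (lam / 2) < r)
    (q : Fin N → EuclideanSpace ℝ (Fin d))
    (hQ : ∀ i j, i ≠ j → dist (q i) (q j) ≤ lam) :
    volume (Metric.closedBall (0 : EuclideanSpace ℝ (Fin d))
        (Real.sqrt (r ^ 2 - (((d : ℝ) - 1) / ((d : ℝ) + 1)) * (lam / 2) ^ 2) - lam / 2)) ≤
      volume (⋂ i, Metric.closedBall (q i) r) := by
  classical
  rcases Nat.eq_zero_or_pos N with hN0 | hN
  · subst hN0
    rw [Set.iInter_of_empty]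
    exact measure_mono (Set.subset_univ _)
  haveI : Nonempty (Fin N) := ⟨⟨0, hN⟩⟩
  have hd0 : 0 < d := by omega
  obtain ⟨c, hc⟩ := jung_circumradius hN lam hlam.le q hQ
  set J : ℝ := Real.sqrt (2 * (d : ℝ) / ((d : ℝ) + 1)) * (lam / 2) with hJdef
  have hJ0 : 0 ≤ J := mul_nonneg (Real.sqrt_nonneg _) (by linarith)
  have hJsq : J ^ 2 = 2 * (d : ℝ) / ((d : ℝ) + 1) * (lam / 2) ^ 2 := by
    rw [hJdef, mul_pow, Real.sq_sqrt (by positivity)]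
  set csq : ℝ := r ^ 2 - J ^ 2 with hcsqdef
  have hcsq : 0 < csq := by nlinarith [hJ0, hr]
  set g : Metric.sphere (0 : EuclideanSpace ℝ (Fin d)) 1 → ℝ :=
    fun u => Finset.univ.inf' Finset.univ_nonempty
      (fun i => ⟪q i - c, (u : EuclideanSpace ℝ (Fin d))⟫) with hgdef
  have hgcont : Continuous g :=
    Continuous.finset_inf'_apply Finset.univ_nonempty
      (fun i _ => Continuous.inner continuous_const continuous_subtype_val)
  set f : Metric.sphere (0 : EuclideanSpace ℝ (Fin d)) 1 → ℝ :=
    fun u => Real.sqrt (csq + g u ^ 2) + g u with hfdef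
  have hfeq : ∀ u, f u = Real.sqrt (csq + (- g u) ^ 2) - (- g u) := by
    intro u
    rw [hfdef]
    simp only [neg_sq, sub_neg_eq_add]
  have hfpos : ∀ u, 0 < f u := fun u => (hfeq u) ▸ sqrtF_pos csq (- g u) hcsq
  have hfcont : Continuous f :=
    (Real.continuous_sqrt.comp (continuous_const.add (hgcont.pow 2))).add hgcont
  set h0 : ℝ := Real.sqrt (csq + (lam / 2) ^ 2) - lam / 2 with hh0def
  have hh0pos : 0 < h0 := sqrtF_pos csq (lam / 2) hcsq
  have hradius : Real.sqrt (r ^ 2 - (((d : ℝ) - 1) / ((d : ℝ) + 1)) * (lam / 2) ^ 2) - lam / 2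
      = h0 := by
    rw [hh0def]
    congr 2
    rw [hcsqdef, hJsq]
    have hne : ((d : ℝ) + 1) ≠ 0 := by positivity
    field_simp
    ring
  rw [hradius]
  -- the translated radial set is contained in the intersection of balls
  have hsub : (fun x => c + x) '' (radialSet d f) ⊆ ⋂ i, Metric.closedBall (q i) r := by
    rintro _ ⟨x, hx, rfl⟩
    rw [radialSet_eq] at hx
    obtain ⟨u, t, ht0, htf, rfl⟩ := hx
    rw [Set.mem_iInter]
    intro i
    rw [Metric.mem_closedBall]
    have hnu : ‖(u : EuclideanSpace ℝ (Fin d))‖ = 1 := mem_sphere_zero_iff_norm.mp u.2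
    have hpi : ‖q i - c‖ ≤ J := by rw [← dist_eq_norm]; exact hc i
    have hgi : g u ≤ ⟪q i - c, (u : EuclideanSpace ℝ (Fin d))⟫ :=
      Finset.inf'_le _ (Finset.mem_univ i)
    have hsqrt2 : Real.sqrt (csq + g u ^ 2) ^ 2 = csq + g u ^ 2 :=
      Real.sq_sqrt (by positivity)
    have hgle : g u ≤ Real.sqrt (csq + g u ^ 2) := by
      calc g u ≤ |g u| := le_abs_self _
        _ = Real.sqrt (g u ^ 2) := (Real.sqrt_sq_eq_abs _).symm
        _ ≤ _ := Real.sqrt_le_sqrt (by linarith)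
    have ht2 : t ^ 2 - 2 * t * g u ≤ csq := by
      have h1 : 0 ≤ t - (g u - Real.sqrt (csq + g u ^ 2)) := by linarith
      have h2 : t - (g u + Real.sqrt (csq + g u ^ 2)) ≤ 0 := by
        rw [hfdef] at htf
        simp only at htf
        linarith
      nlinarith [mul_nonneg h1 (neg_nonneg.mpr h2)]
    have hexp : dist (c + t • (u : EuclideanSpace ℝ (Fin d))) (q i) ^ 2
        = t ^ 2 - 2 * (t * ⟪q i - c, (u : EuclideanSpace ℝ (Fin d))⟫) + ‖q i - c‖ ^ 2 := by
      rw [dist_eq_norm]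
      have he : c + t • (u : EuclideanSpace ℝ (Fin d)) - q i
          = t • (u : EuclideanSpace ℝ (Fin d)) - (q i - c) := by abel
      rw [he, norm_sub_sq_real, real_inner_smul_left, real_inner_comm, norm_smul,
        Real.norm_eq_abs, hnu, mul_one, sq_abs]
    have hr2 : dist (c + t • (u : EuclideanSpace ℝ (Fin d))) (q i) ^ 2 ≤ r ^ 2 := by
      rw [hexp]
      have hJ2 : ‖q i - c‖ ^ 2 ≤ J ^ 2 := pow_le_pow_left₀ (norm_nonneg _) hpi 2
      have hmono : 2 * t * g u ≤ 2 * t * ⟪q i - c, (u : EuclideanSpace ℝ (Fin d))⟫ :=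
        mul_le_mul_of_nonneg_left hgi (by linarith)
      rw [hcsqdef] at ht2
      linarith
    have hrpos : 0 ≤ r := le_trans hJ0 hr.le
    calc dist (c + t • (u : EuclideanSpace ℝ (Fin d))) (q i)
        = Real.sqrt (dist (c + t • (u : EuclideanSpace ℝ (Fin d))) (q i) ^ 2) :=
          (Real.sqrt_sq dist_nonneg).symm
      _ ≤ Real.sqrt (r ^ 2) := Real.sqrt_le_sqrt hr2
      _ = r := Real.sqrt_sq hrpos
  have hm_f : Measurable f := hfcont.measurable
  have hnegc : Continuous (fun u : Metric.sphere (0 : EuclideanSpace ℝ (Fin d)) 1 => -u) :=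
    Continuous.subtype_mk (continuous_subtype_val.neg) _
  have hv1 := volume_radialSet hd0 f hm_f hfpos
  have hv2 := volume_radialSet hd0 (fun u => f (-u)) (hm_f.comp hnegc.measurable)
    (fun u => hfpos (-u))
  have hvol_neg : volume (radialSet d (fun u => f (-u))) = volume (radialSet d f) := by
    rw [← radialSet_neg, Measure.measure_neg]
  haveI : Nontrivial (EuclideanSpace ℝ (Fin d)) := by
    apply Module.nontrivial_of_finrank_pos (R := ℝ)
    rw [finrank_euclideanSpace_fin]
    exact hd0
  have hball : volume (Metric.closedBall (0 : EuclideanSpace ℝ (Fin d)) h0)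
      = ∫⁻ _u, ENNReal.ofReal (h0 ^ d / d)
          ∂((volume : Measure (EuclideanSpace ℝ (Fin d))).toSphere) := by
    have hset : Metric.closedBall (0 : EuclideanSpace ℝ (Fin d)) h0 \ {0}
        = radialSet d (fun _ => h0) := by
      rw [radialSet_eq]
      ext x
      constructor
      · rintro ⟨hx1, hx2⟩
        have hxne : x ≠ 0 := hx2
        have hnx : 0 < ‖x‖ := norm_pos_iff.mpr hxne
        refine ⟨⟨‖x‖⁻¹ • x, ?_⟩, ‖x‖, hnx, ?_, ?_⟩
        · rw [mem_sphere_zero_iff_norm, norm_smul, norm_inv, norm_norm,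
            inv_mul_cancel₀ hnx.ne']
        · exact mem_closedBall_zero_iff.mp hx1
        · exact (smul_inv_smul₀ hnx.ne' x).symm
      · rintro ⟨u, t, ht0, hth, rfl⟩
        have hnu : ‖(u : EuclideanSpace ℝ (Fin d))‖ = 1 := mem_sphere_zero_iff_norm.mp u.2
        constructor
        · rw [mem_closedBall_zero_iff, norm_smul, Real.norm_eq_abs, abs_of_pos ht0, hnu,
            mul_one]
          exact hth
        · simp only [Set.mem_singleton_iff]
          exact smul_ne_zero ht0.ne' (ne_of_mem_sphere u.2 one_ne_zero)
    calc volume (Metric.closedBall (0 : EuclideanSpace ℝ (Fin d)) h0)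
        = volume (Metric.closedBall (0 : EuclideanSpace ℝ (Fin d)) h0 \ {0}) :=
          (measure_diff_null (measure_singleton 0)).symm
      _ = volume (radialSet d (fun _ => h0)) := by rw [hset]
      _ = _ := volume_radialSet hd0 _ measurable_const (fun _ => hh0pos)
  have htrans : volume (radialSet d f) = volume ((fun x => c + x) '' (radialSet d f)) := by
    have himg : (fun x => c + x) '' (radialSet d f)
        = (fun x : EuclideanSpace ℝ (Fin d) => -c + x) ⁻¹' (radialSet d f) := by
      ext y
      constructor
      · rintro ⟨x, hx, rfl⟩
        rw [Set.mem_preimage]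
        have : -c + (c + x) = x := by abel
        rw [this]
        exact hx
      · intro h
        exact ⟨-c + y, h, by simp⟩
    rw [himg, measure_preimage_add]
  have hpair : ∀ u : Metric.sphere (0 : EuclideanSpace ℝ (Fin d)) 1,
      ENNReal.ofReal (h0 ^ d / d) + ENNReal.ofReal (h0 ^ d / d)
      ≤ ENNReal.ofReal (f u ^ d / d) + ENNReal.ofReal (f (-u) ^ d / d) := by
    intro u
    have hnu : ‖(u : EuclideanSpace ℝ (Fin d))‖ = 1 := mem_sphere_zero_iff_norm.mp u.2
    have hx12 : (- g u) + (- g (-u)) ≤ 2 * (lam / 2) := by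
      obtain ⟨i, _, hi⟩ := Finset.exists_mem_eq_inf' (Finset.univ_nonempty (α := Fin N))
        (fun i => ⟪q i - c, (u : EuclideanSpace ℝ (Fin d))⟫)
      obtain ⟨j, _, hj⟩ := Finset.exists_mem_eq_inf' (Finset.univ_nonempty (α := Fin N))
        (fun i => ⟪q i - c,
          ((-u : Metric.sphere (0 : EuclideanSpace ℝ (Fin d)) 1) : EuclideanSpace ℝ (Fin d))⟫)
      have hgu : g u = ⟪q i - c, (u : EuclideanSpace ℝ (Fin d))⟫ := hi
      have hgv : g (-u) = ⟪q j - c,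
          ((-u : Metric.sphere (0 : EuclideanSpace ℝ (Fin d)) 1) : EuclideanSpace ℝ (Fin d))⟫ :=
        hj
      have hgv' : g (-u) = - ⟪q j - c, (u : EuclideanSpace ℝ (Fin d))⟫ := by
        rw [hgv, show ((-u : Metric.sphere (0 : EuclideanSpace ℝ (Fin d)) 1) :
          EuclideanSpace ℝ (Fin d)) = -(u : EuclideanSpace ℝ (Fin d)) from rfl,
          inner_neg_right]
      have hfin : ⟪q j - q i, (u : EuclideanSpace ℝ (Fin d))⟫ ≤ lam := by
        rcases eq_or_ne j i with h | h
        · rw [h]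
          simp only [sub_self, inner_zero_left]
          linarith
        · calc ⟪q j - q i, (u : EuclideanSpace ℝ (Fin d))⟫
              ≤ ‖q j - q i‖ * ‖(u : EuclideanSpace ℝ (Fin d))‖ := real_inner_le_norm _ _
            _ = dist (q j) (q i) := by rw [hnu, mul_one, dist_eq_norm]
            _ ≤ lam := hQ j i h
      have hsplit : ⟪q j - q i, (u : EuclideanSpace ℝ (Fin d))⟫
          = ⟪q j - c, (u : EuclideanSpace ℝ (Fin d))⟫
            - ⟪q i - c, (u : EuclideanSpace ℝ (Fin d))⟫ := by
        rw [← inner_sub_left]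
        congr 1
        abel
      rw [hgu, hgv']
      rw [hsplit] at hfin
      linarith
    have hreal : 2 * h0 ^ d ≤ f u ^ d + f (-u) ^ d := by
      have hpp := pair_pow_ineq d csq (lam / 2) (- g u) (- g (-u)) hcsq hx12
      rw [← hfeq u, ← hfeq (-u)] at hpp
      rw [hh0def]
      linarith
    have hdpos : (0 : ℝ) < (d : ℝ) := Nat.cast_pos.mpr hd0
    rw [← ENNReal.ofReal_add (div_nonneg (pow_nonneg hh0pos.le d) hdpos.le)
        (div_nonneg (pow_nonneg hh0pos.le d) hdpos.le),
      ← ENNReal.ofReal_add (div_nonneg (pow_nonneg (hfpos u).le d) hdpos.le)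
        (div_nonneg (pow_nonneg (hfpos (-u)).le d) hdpos.le)]
    apply ENNReal.ofReal_le_ofReal
    rw [← add_div, ← add_div]
    exact (div_le_div_iff_of_pos_right hdpos).mpr (by linarith)
  have hm1 : Measurable fun u : Metric.sphere (0 : EuclideanSpace ℝ (Fin d)) 1 =>
      ENNReal.ofReal (f u ^ d / d) :=
    ENNReal.measurable_ofReal.comp ((hm_f.pow_const d).div_const d)
  have hchain : volume (Metric.closedBall (0 : EuclideanSpace ℝ (Fin d)) h0)
        + volume (Metric.closedBall (0 : EuclideanSpace ℝ (Fin d)) h0)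
      ≤ volume (⋂ i, Metric.closedBall (q i) r)
        + volume (⋂ i, Metric.closedBall (q i) r) := by
    have hstep : volume (radialSet d f) ≤ volume (⋂ i, Metric.closedBall (q i) r) :=
      le_trans (le_of_eq htrans) (measure_mono hsub)
    calc volume (Metric.closedBall (0 : EuclideanSpace ℝ (Fin d)) h0)
          + volume (Metric.closedBall (0 : EuclideanSpace ℝ (Fin d)) h0)
        = ∫⁻ _u, (ENNReal.ofReal (h0 ^ d / d) + ENNReal.ofReal (h0 ^ d / d))
            ∂((volume : Measure (EuclideanSpace ℝ (Fin d))).toSphere) := by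
          rw [hball, ← lintegral_add_left measurable_const]
      _ ≤ ∫⁻ u, (ENNReal.ofReal (f u ^ d / d) + ENNReal.ofReal (f (-u) ^ d / d))
            ∂((volume : Measure (EuclideanSpace ℝ (Fin d))).toSphere) :=
          lintegral_mono hpair
      _ = (∫⁻ u, ENNReal.ofReal (f u ^ d / d)
            ∂((volume : Measure (EuclideanSpace ℝ (Fin d))).toSphere))
          + ∫⁻ u, ENNReal.ofReal (f (-u) ^ d / d)
            ∂((volume : Measure (EuclideanSpace ℝ (Fin d))).toSphere) :=
          lintegral_add_left hm1 _
      _ = volume (radialSet d f) + volume (radialSet d (fun u => f (-u))) := by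
          rw [hv1, hv2]
      _ = volume (radialSet d f) + volume (radialSet d f) := by rw [hvol_neg]
      _ ≤ _ := add_le_add hstep hstep
  rw [← two_mul, ← two_mul] at hchain
  exact (ENNReal.mul_le_mul_iff_right (by norm_num) (by norm_num)).mp hchain
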